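/- With the notation of Algorithm 1 and assuming functions T_k: ℝ → [0,1], define W_{d,k} = (1/2^d) Σ_{u ∈ {0,1}^d} (max_{i ∈ B^d_u} T_k(Y_k^{(i)}) − min_{i ∈ B^d_u} T_k(Y_k^{(i)})). If 1 ≤ d ≤ m and k = (d−1 mod K)+1 (the sorted coordinate), then W_{d,k} ≤ W_{d−1,k}/2. -/
import Mathlib

private lemma iSup_coe_eq_sup' {ι : Type*} (s : Finset ι) (hs : s.Nonempty) (t : ι → ℝ) :
    (⨆ i : (s : Finset ι), t i) = s.sup' hs t := by
  rw [Finset.sup'_eq_csSup_image, iSup]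
  congr 1
  ext x
  simp [Set.range, Subtype.exists]

private lemma iInf_coe_eq_inf' {ι : Type*} (s : Finset ι) (hs : s.Nonempty) (t : ι → ℝ) :
    (⨅ i : (s : Finset ι), t i) = s.inf' hs t := by
  rw [Finset.inf'_eq_csInf_image, iInf]
  congr 1
  ext x
  simp [Set.range, Subtype.exists]

private def snocEquiv (d : ℕ) : ((Fin d → Bool) × Bool) ≃ (Fin (d + 1) → Bool) where
  toFun p := Fin.snoc p.1 p.2
  invFun v := (fun i => v i.castSucc, v (Fin.last d))
  left_inv p := by simp
  right_inv v := by
    funext i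
    refine Fin.lastCases ?_ ?_ i <;> simp

/-- One level of the recursive sort-and-split of Algorithm 1, for the sorted
coordinate `k = (d-1 mod K)+1`.  The parent sets at level `d` are `Bp u` for
`u : Fin d → Bool`, the child sets at level `d+1` are `Bc v` for
`v : Fin (d+1) → Bool`, and `t i = T_k (Y_k^{(i)})` is the (transformed) sorted
coordinate of sample `i`. -/
theorem stmt_8 {ι : Type*} [Fintype ι] [DecidableEq ι] (d : ℕ)
    (Bp : (Fin d → Bool) → Finset ι) (Bc : (Fin (d + 1) → Bool) → Finset ι)
    (t : ι → ℝ) (ht : ∀ i, t i ∈ Set.Icc (0 : ℝ) 1)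
    (hne : ∀ v : Fin (d + 1) → Bool, (Bc v).Nonempty)
    (hunion : ∀ u : Fin d → Bool, Bc (Fin.snoc u false) ∪ Bc (Fin.snoc u true) = Bp u)
    (hdisj : ∀ u : Fin d → Bool, Disjoint (Bc (Fin.snoc u false)) (Bc (Fin.snoc u true)))
    (hsort : ∀ u : Fin d → Bool,
      ∀ i₀ ∈ Bc (Fin.snoc u false), ∀ i₁ ∈ Bc (Fin.snoc u true), t i₀ ≤ t i₁) :
    (1 / 2 ^ (d + 1) : ℝ) * ∑ v : Fin (d + 1) → Bool,
        ((⨆ i : (Bc v : Finset ι), t i) - ⨅ i : (Bc v : Finset ι), t i) ≤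
      (1 / 2) * ((1 / 2 ^ d : ℝ) * ∑ u : Fin d → Bool,
        ((⨆ i : (Bp u : Finset ι), t i) - ⨅ i : (Bp u : Finset ι), t i)) := by
  have hPne : ∀ u : Fin d → Bool, (Bp u).Nonempty := fun u => by
    rw [← hunion u]
    exact (hne (Fin.snoc u false)).mono Finset.subset_union_left
  -- reindex the child sum
  have hsum : ∑ v : Fin (d + 1) → Bool,
        ((⨆ i : (Bc v : Finset ι), t i) - ⨅ i : (Bc v : Finset ι), t i)
      = ∑ u : Fin d → Bool,
        (((Bc (Fin.snoc u false)).sup' (hne _) t - (Bc (Fin.snoc u false)).inf' (hne _) t) +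
         ((Bc (Fin.snoc u true)).sup' (hne _) t - (Bc (Fin.snoc u true)).inf' (hne _) t)) := by
    rw [← (snocEquiv d).sum_comp (fun v => (⨆ i : (Bc v : Finset ι), t i) -
      ⨅ i : (Bc v : Finset ι), t i), Fintype.sum_prod_type]
    refine Finset.sum_congr rfl fun u _ => ?_
    rw [Fintype.sum_bool]
    simp only [snocEquiv, Equiv.coe_fn_mk]
    rw [iSup_coe_eq_sup' _ (hne _), iInf_coe_eq_inf' _ (hne _),
      iSup_coe_eq_sup' _ (hne _), iInf_coe_eq_inf' _ (hne _)]
    ring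
  rw [hsum]
  have key : ∀ u : Fin d → Bool,
      (((Bc (Fin.snoc u false)).sup' (hne _) t - (Bc (Fin.snoc u false)).inf' (hne _) t) +
       ((Bc (Fin.snoc u true)).sup' (hne _) t - (Bc (Fin.snoc u true)).inf' (hne _) t)) ≤
      ((⨆ i : (Bp u : Finset ι), t i) - ⨅ i : (Bp u : Finset ι), t i) := by
    intro u
    rw [iSup_coe_eq_sup' _ (hPne u), iInf_coe_eq_inf' _ (hPne u)]
    have hsub0 : Bc (Fin.snoc u false) ⊆ Bp u := by
      rw [← hunion u]; exact Finset.subset_union_left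
    have hsub1 : Bc (Fin.snoc u true) ⊆ Bp u := by
      rw [← hunion u]; exact Finset.subset_union_right
    have h1 : (Bc (Fin.snoc u true)).sup' (hne _) t ≤ (Bp u).sup' (hPne u) t :=
      Finset.sup'_mono t hsub1 (hne _)
    have h2 : (Bp u).inf' (hPne u) t ≤ (Bc (Fin.snoc u false)).inf' (hne _) t :=
      Finset.inf'_mono t hsub0 (hne _)
    have h3 : (Bc (Fin.snoc u false)).sup' (hne _) t ≤ (Bc (Fin.snoc u true)).inf' (hne _) t := by
      apply Finset.sup'_le
      intro i hi
      apply Finset.le_inf'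
      intro j hj
      exact hsort u i hi j hj
    linarith
  have hSsum : ∑ u : Fin d → Bool,
        (((Bc (Fin.snoc u false)).sup' (hne _) t - (Bc (Fin.snoc u false)).inf' (hne _) t) +
         ((Bc (Fin.snoc u true)).sup' (hne _) t - (Bc (Fin.snoc u true)).inf' (hne _) t)) ≤
      ∑ u : Fin d → Bool,
        ((⨆ i : (Bp u : Finset ι), t i) - ⨅ i : (Bp u : Finset ι), t i) :=
    Finset.sum_le_sum fun u _ => key u
  have hc : (1 / 2 : ℝ) * (1 / 2 ^ d) = 1 / 2 ^ (d + 1) := by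
    rw [pow_succ]; ring
  rw [← mul_assoc, hc]
  exact mul_le_mul_of_nonneg_left hSsum (by positivity)
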